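/- Let n ≥ 2 and r > 0 satisfy 2·r·(n−1) ≥ 1, 2·r·(n−2) < 1, and 2·r ≤ 1 (so the minimal number of radius-r intervals needed to cover [0,1] is n−1, i.e. there is exactly one excess agent). Then Cov_I(n,r) is homotopy equivalent to P_n, the geometric 1-skeleton of the permutahedron Π_{n−1}: there exists a homotopy equivalence between the subspace Cov_I(n,r) and the subspace P_n of Fin n → ℝ. -/

import Mathlib

set_option linter.unusedSectionVars false
set_option maxHeartbeats 1000000

/-- The covering configuration space of `n` labelled radius-`r` intervals on `[0,1]`. -/
def CovI (n : ℕ) (r : ℝ) : Set (Fin n → ℝ) :=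
  {x | (∀ i, Set.Icc (x i - r) (x i + r) ⊆ Set.Icc 0 1) ∧
    Set.Icc (0 : ℝ) 1 ⊆ ⋃ i, Set.Icc (x i - r) (x i + r)}

/-- The vertex of the permutahedron corresponding to the permutation `σ`. -/
def permVec {n : ℕ} (σ : Equiv.Perm (Fin n)) : Fin n → ℝ :=
  fun i => ((σ i : ℕ) : ℝ) + 1

/-- The geometric 1-skeleton of the permutahedron `Π_{n-1}` in `Fin n → ℝ`:
the union of the edges joining `permVec σ` to `permVec (swap k (k+1) * σ)`. -/
def permSkel1 (n : ℕ) : Set (Fin n → ℝ) :=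
  ⋃ (σ : Equiv.Perm (Fin n)) (k : ℕ) (h : k + 1 < n),
    segment ℝ (permVec σ)
      (permVec (Equiv.swap (⟨k, Nat.lt_of_succ_lt h⟩ : Fin n) (⟨k + 1, h⟩ : Fin n) * σ))

namespace CovPermAux

/-! ### Basic quantities -/

section Defs

variable (n : ℕ) (r : ℝ)

/-- the regular spacing of vertex configurations -/
noncomputable def al : ℝ := (1 - 2*r)/((n:ℝ)-1)

/-- the spacing increment -/
noncomputable def cc : ℝ := (1 - 2*r)/(((n:ℝ)-1)*((n:ℝ)-2))

/-- separation threshold -/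
noncomputable def ep : ℝ := (1 - 2*r*((n:ℝ)-2))/2

/-- vertex configuration positions -/
noncomputable def z (p : ℕ) : ℝ := r + p * al n r

/-- ramp function -/
noncomputable def sfun (d : ℝ) : ℝ := max 0 (min 1 (1/2 + d/(2*ep n r)))

/-- the forward map -/
noncomputable def f (x : Fin n → ℝ) : Fin n → ℝ := fun i => 1/2 + ∑ j, sfun n r (x i - x j)

/-- parametrized point on an edge of the permutahedron skeleton -/
noncomputable def pt (σ : Equiv.Perm (Fin n)) (k : ℕ) (t : ℝ) : Fin n → ℝ := fun i =>
  if (σ i : ℕ) = k then (k:ℝ)+1+t else if (σ i : ℕ) = k+1 then (k:ℝ)+2-t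
  else ((σ i : ℕ):ℝ)+1

/-- configuration corresponding to an edge point (for `t ∈ [0,1/2]`) -/
noncomputable def gpos (σ : Equiv.Perm (Fin n)) (k : ℕ) (t : ℝ) : Fin n → ℝ := fun i =>
  z n r (σ i) + 2*t*(cc n r)*(((σ i : ℕ):ℝ)
    - ((n:ℝ)-1)*(if k+1 ≤ (σ i : ℕ) then 1 else 0))

/-- distance to nearest integer -/
noncomputable def saw (x : ℝ) : ℝ := |x - round x|

noncomputable def SQ : ℝ := ∑ p ∈ Finset.range n, ((p:ℝ)+1)^2
noncomputable def CB : ℝ := ∑ p ∈ Finset.range n, ((p:ℝ)+1)^3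

/-- recover the edge index from a skeleton point -/
noncomputable def kval (v : Fin n → ℝ) : ℕ :=
  (round ((((CB n - ∑ j, (v j)^3)/(3*((SQ n - ∑ j, (v j)^2)/2))) - 3)/2)).toNat

/-- the homotopy inverse -/
noncomputable def g (v : Fin n → ℝ) : Fin n → ℝ := fun i =>
  z n r (round (v i) - 1).toNat + (∑ j, saw (v j)) * cc n r *
    ((((round (v i) - 1).toNat : ℕ) : ℝ)
      - ((n:ℝ)-1)*(if kval n v + 1 ≤ (round (v i) - 1).toNat then 1 else 0))

/-- sorted-position values of a configuration -/
noncomputable def ypos (π : Equiv.Perm (Fin n)) (x : Fin n → ℝ) : ℕ → ℝ :=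
  fun p => if h : p < n then x (π ⟨p, h⟩) else 0

/-- the (convex) cone of configurations sorted by `π` with bounded gaps -/
def Cone (π : Equiv.Perm (Fin n)) : Set (Fin n → ℝ) :=
  {x | ypos n π x 0 = r ∧ ypos n π x (n-1) = 1 - r ∧
    ∀ p, p + 1 < n →
      0 ≤ ypos n π x (p+1) - ypos n π x p ∧ ypos n π x (p+1) - ypos n π x p ≤ 2*r}

end Defs

/-! ### Arithmetic facts -/

section Arith

variable {n : ℕ} {r : ℝ}
variable (hn : 2 ≤ n) (hr : 0 < r)
variable (h1 : 1 ≤ 2 * r * ((n : ℝ) - 1)) (h2 : 2 * r * ((n : ℝ) - 2) < 1) (h3 : 2 * r ≤ 1)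

include hn in
lemma hn2 : (2:ℝ) ≤ (n:ℝ) := by exact_mod_cast hn

include hn in
lemma hn1pos : (0:ℝ) < (n:ℝ) - 1 := by have := hn2 hn; linarith

include hn h1 h3 in
lemma L_nonneg : (0:ℝ) ≤ 1 - 2*r := by linarith

include hn h1 h3 in
lemma al_nonneg : 0 ≤ al n r := by
  have := hn1pos hn
  exact div_nonneg (by linarith) (by linarith)

include hn in
lemma al_eq : ((n:ℝ)-1) * al n r = 1 - 2*r := by
  have := hn1pos hn
  rw [al, mul_div_assoc']; exact mul_div_cancel_left₀ _ this.ne'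

include hn h1 h3 in
lemma n2_L0 (h : n = 2) : 1 - 2*r = 0 := by
  subst h
  norm_num at h1
  linarith

include hn h1 h3 in
lemma cc_nonneg : 0 ≤ cc n r := by
  rcases eq_or_lt_of_le hn with h|h
  · rw [cc, n2_L0 hn h1 h3 h.symm]; simp
  · have h3n : (3:ℕ) ≤ n := h
    have : (3:ℝ) ≤ (n:ℝ) := by exact_mod_cast h3n
    apply div_nonneg (by linarith) (by nlinarith)

include hn h1 h3 in
lemma al_eq_cc : ((n:ℝ)-2) * cc n r = al n r := by
  rcases eq_or_lt_of_le hn with h|h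
  · have hL := n2_L0 hn h1 h3 h.symm
    rw [al, cc, hL]; simp
  · have h3n : (3:ℕ) ≤ n := h
    have h3 : (3:ℝ) ≤ (n:ℝ) := by exact_mod_cast h3n
    have e1 : ((n:ℝ)-1) ≠ 0 := by linarith
    have e2 : ((n:ℝ)-2) ≠ 0 := by linarith
    rw [al, cc]
    field_simp

include hn h1 h3 in
lemma beta_le : al n r + cc n r ≤ 2*r := by
  rcases eq_or_lt_of_le hn with h|h
  · have hL := n2_L0 hn h1 h3 h.symm
    have h2' : n = 2 := h.symm
    subst h2'
    rw [al, cc, hL]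
    norm_num
    linarith
  · have h3n : (3:ℕ) ≤ n := h
    have h3' : (3:ℝ) ≤ (n:ℝ) := by exact_mod_cast h3n
    have hcc := cc_nonneg hn h1 h3
    have hal := al_eq_cc hn h1 h3
    -- (n-2)*(al+cc) = (n-1)*al ≤ 2r(n-2)
    have hae : ((n:ℝ)-1) * al n r = 1 - 2*r := al_eq (r := r) hn
    have key : ((n:ℝ)-2) * (al n r + cc n r) = 1 - 2*r := by nlinarith
    have h12 : 1 - 2*r ≤ 2*r*((n:ℝ)-2) := by linarith
    nlinarith [key, h12]

include hn h1 h3 in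
lemma al_le : al n r ≤ 2*r := by
  have := beta_le hn h1 h3
  have := cc_nonneg hn h1 h3
  linarith

include h2 in
lemma ep_pos : 0 < ep n r := by rw [ep]; linarith

include hn hr h1 h3 in
lemma ep_le_al (h3n : 3 ≤ n) : ep n r ≤ al n r := by
  have h3' : (3:ℝ) ≤ (n:ℝ) := by exact_mod_cast h3n
  have hMn : 1 ≤ 2*r*(n:ℝ) := by nlinarith
  rw [ep, al]
  rw [div_le_div_iff₀ (by norm_num) (by linarith)]
  nlinarith

end Arith

/-! ### Properties of the ramp function -/

section Sfun

variable {n : ℕ} {r : ℝ}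
variable (hep : 0 < ep n r)

lemma sfun_nonneg (d : ℝ) : 0 ≤ sfun n r d := le_max_left _ _

lemma sfun_le_one (d : ℝ) : sfun n r d ≤ 1 := by
  rw [sfun]
  rcases le_total (min 1 (1/2 + d/(2*ep n r))) 0 with h|h
  · rw [max_eq_left h]; norm_num
  · rw [max_eq_right h]; exact min_le_left _ _

include hep in
lemma sfun_of_ge {d : ℝ} (h : ep n r ≤ d) : sfun n r d = 1 := by
  have h' : 1 ≤ 1/2 + d/(2*ep n r) := by
    have : 1/2 ≤ d/(2*ep n r) := by
      rw [le_div_iff₀ (by linarith)]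
      linarith
    linarith
  rw [sfun, min_eq_left h', max_eq_right (by norm_num)]

include hep in
lemma sfun_of_le {d : ℝ} (h : d ≤ -ep n r) : sfun n r d = 0 := by
  have h' : 1/2 + d/(2*ep n r) ≤ 0 := by
    have : d/(2*ep n r) ≤ -(1/2) := by
      rw [div_le_iff₀ (by linarith)]
      linarith
    linarith
  rw [sfun, max_eq_left]
  exact le_trans (min_le_right _ _) h'

include hep in
lemma sfun_neg (d : ℝ) : sfun n r (-d) = 1 - sfun n r d := by
  have harg : 1/2 + (-d)/(2*ep n r) = 1 - (1/2 + d/(2*ep n r)) := by ring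
  rw [sfun, sfun, harg]
  set u := 1/2 + d/(2*ep n r) with hu
  rcases le_total u 0 with h|h
  · rw [min_eq_left (by linarith : (1:ℝ) ≤ 1 - u), max_eq_right (by norm_num : (0:ℝ) ≤ 1),
      min_eq_right (by linarith : u ≤ 1), max_eq_left h]
    ring
  · rcases le_total 1 u with h2|h2
    · rw [min_eq_right (by linarith : 1 - u ≤ 1), max_eq_left (by linarith : 1 - u ≤ 0),
        min_eq_left h2, max_eq_right (by norm_num : (0:ℝ) ≤ 1)]
      norm_num
    · rw [min_eq_right (by linarith : 1 - u ≤ 1), max_eq_right (by linarith : 0 ≤ 1 - u),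
        min_eq_right h2, max_eq_right h]

lemma sfun_nonpos_le_half {d : ℝ} (hd : d ≤ 0) (hep' : 0 ≤ ep n r) :
    sfun n r d ≤ 1/2 := by
  rw [sfun]
  rcases le_total (min 1 (1/2 + d/(2*ep n r))) 0 with h|h
  · rw [max_eq_left h]; norm_num
  · rw [max_eq_right h]
    refine le_trans (min_le_right _ _) ?_
    have h2e : 0 ≤ (2*ep n r)⁻¹ := inv_nonneg.mpr (by linarith)
    have hde : d/(2*ep n r) = d * (2*ep n r)⁻¹ := div_eq_mul_inv _ _
    nlinarith

end Sfun

/-! ### The key summation lemma -/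

section SumEval

variable {n : ℕ} {r : ℝ}

lemma basesum {p : ℕ} (hp : p < n) :
    ∑ q : Fin n, (if (q:ℕ) < p then (1:ℝ) else if (q:ℕ) = p then 1/2 else 0)
      = (p:ℝ) + 1/2 := by
  rw [Fin.sum_univ_eq_sum_range (fun q => if q < p then (1:ℝ) else if q = p then 1/2 else 0) n]
  rw [← Finset.sum_subset (Finset.range_subset_range.mpr hp)
    (by
      intro x _ hx
      rw [Finset.mem_range, not_lt] at hx
      have h1 : ¬ x < p := by omega
      have h2 : ¬ x = p := by omega
      simp [h1, h2])]
  rw [Finset.sum_range_succ]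
  simp only [lt_irrefl, if_false, if_pos rfl]
  have : ∀ x ∈ Finset.range p, (if x < p then (1:ℝ) else if x = p then 1/2 else 0) = 1 := by
    intro x hx
    rw [Finset.mem_range] at hx
    simp [hx]
  rw [Finset.sum_congr rfl this, Finset.sum_const, Finset.card_range]
  simp

/-- The main evaluation of `f`-type sums on well-separated configurations. -/
lemma sumeval (hep : 0 < ep n r) (y : ℕ → ℝ) (k p : ℕ) (hk : k + 1 < n) (hp : p < n)
    (hsep : ∀ a b, a < b → b < n → ¬(a = k ∧ b = k+1) → ep n r ≤ y b - y a) :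
    1/2 + ∑ q : Fin n, sfun n r (y p - y (q:ℕ)) =
      (if p = k then (k:ℝ)+1+ sfun n r (y k - y (k+1))
       else if p = k+1 then (k:ℝ)+2- sfun n r (y k - y (k+1))
       else (p:ℝ)+1) := by
  set u := sfun n r (y k - y (k+1)) with hu
  have hmain : ∀ q : Fin n,
      sfun n r (y p - y (q:ℕ)) =
        (if (q:ℕ) < p then (1:ℝ) else if (q:ℕ) = p then 1/2 else 0)
        + (if p = k ∧ (q:ℕ) = k+1 then u - 0
           else if p = k+1 ∧ (q:ℕ) = k then (1 - u) - 1 else 0) := by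
    intro q
    by_cases hq1 : p = k ∧ (q:ℕ) = k+1
    · obtain ⟨hpk, hqk⟩ := hq1
      have hlt : ¬ ((q:ℕ) < p) := by omega
      have hne : ¬ ((q:ℕ) = p) := by omega
      simp only [hpk, hqk, hlt, hne, if_false, if_true, and_self, if_pos rfl]
      norm_num
      exact hu.symm
    · by_cases hq2 : p = k+1 ∧ (q:ℕ) = k
      · obtain ⟨hpk, hqk⟩ := hq2
        have hlt : (q:ℕ) < p := by omega
        rw [if_pos hlt, hpk, hqk,
          if_neg (by omega : ¬(k+1 = k ∧ k = k+1)), if_pos (⟨rfl, rfl⟩ : k+1 = k+1 ∧ k = k)]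
        have h0 : y (k+1) - y k = -(y k - y (k+1)) := by ring
        rw [h0, sfun_neg hep, ← hu]
        ring
      · simp only [hq1, hq2, if_false, add_zero]
        rcases lt_trichotomy ((q:ℕ)) p with h|h|h
        · rw [if_pos h]
          apply sfun_of_ge hep
          apply hsep _ _ h hp
          intro ⟨ha, hb⟩
          exact hq2 ⟨hb, ha⟩
        · rw [if_neg (by omega), if_pos h, h]
          have : y p - y p = 0 := by ring
          rw [this, sfun]
          have hz : (0:ℝ)/(2*ep n r) = 0 := by simp
          rw [hz, add_zero, min_eq_right (by norm_num), max_eq_right (by norm_num)]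
        · rw [if_neg (by omega), if_neg (by omega)]
          apply sfun_of_le hep
          have := hsep p (q:ℕ) h q.isLt (by
            intro ⟨ha, hb⟩
            exact hq1 ⟨ha, hb⟩)
          linarith
  rw [Finset.sum_congr rfl (fun q _ => hmain q), Finset.sum_add_distrib, basesum hp]
  have hk' : k < n := by omega
  by_cases hpk : p = k
  · subst hpk
    have hthis : ∀ q : Fin n,
        (if p = p ∧ (q:ℕ) = p+1 then u - 0
         else if p = p+1 ∧ (q:ℕ) = p then (1 - u) - 1 else 0)
        = if q = (⟨p+1, hk⟩ : Fin n) then u else 0 := by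
      intro q
      by_cases h : (q:ℕ) = p+1
      · rw [if_pos ⟨rfl, h⟩, if_pos (Fin.ext h)]
        ring
      · rw [if_neg (fun hh => h hh.2), if_neg (by omega : ¬(p = p+1 ∧ (q:ℕ) = p)),
          if_neg (fun hh => h (by rw [hh]))]
    rw [Finset.sum_congr rfl (fun q _ => hthis q), Finset.sum_ite_eq' Finset.univ,
      if_pos (Finset.mem_univ _), if_pos rfl]
    ring
  · by_cases hpk1 : p = k+1
    · subst hpk1
      have hk2 : ¬ (k+1 = k) := by omega
      have hthis : ∀ q : Fin n,
          (if k+1 = k ∧ (q:ℕ) = k+1 then u - 0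
           else if k+1 = k+1 ∧ (q:ℕ) = k then (1 - u) - 1 else 0)
          = if q = (⟨k, hk'⟩ : Fin n) then -u else 0 := by
        intro q
        by_cases h : (q:ℕ) = k
        · rw [if_neg (fun hh => hk2 hh.1), if_pos ⟨rfl, h⟩, if_pos (Fin.ext h)]
          ring
        · rw [if_neg (fun hh => hk2 hh.1), if_neg (fun hh => h hh.2),
            if_neg (fun hh => h (by rw [hh]))]
      rw [Finset.sum_congr rfl (fun q _ => hthis q), Finset.sum_ite_eq' Finset.univ,
        if_pos (Finset.mem_univ _), if_neg hk2, if_pos rfl]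
      push_cast
      ring
    · have hthis : ∀ q : Fin n,
          (if p = k ∧ (q:ℕ) = k+1 then u - 0
           else if p = k+1 ∧ (q:ℕ) = k then (1 - u) - 1 else 0) = 0 := by
        intro q
        rw [if_neg (fun hh => hpk hh.1), if_neg (fun hh => hpk1 hh.1)]
      rw [Finset.sum_congr rfl (fun q _ => hthis q), Finset.sum_const,
        if_neg hpk, if_neg hpk1]
      simp only [smul_zero, add_zero]
      ring

end SumEval

/-! ### Edge parametrization -/

section Edge

variable {n : ℕ} {r : ℝ}

/-- the adjacent transposition -/
def sw (n k : ℕ) (h : k + 1 < n) : Equiv.Perm (Fin n) :=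
  Equiv.swap (⟨k, Nat.lt_of_succ_lt h⟩ : Fin n) (⟨k + 1, h⟩ : Fin n)

lemma swval {k : ℕ} (h : k + 1 < n) (σ : Equiv.Perm (Fin n)) (i : Fin n) :
    ((sw n k h * σ) i : ℕ) =
      if (σ i : ℕ) = k then k+1 else if (σ i : ℕ) = k+1 then k else (σ i : ℕ) := by
  rw [Equiv.Perm.mul_apply, sw]
  by_cases h1 : σ i = (⟨k, Nat.lt_of_succ_lt h⟩ : Fin n)
  · rw [h1, Equiv.swap_apply_left, if_pos rfl]
  · by_cases h2 : σ i = (⟨k+1, h⟩ : Fin n)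
    · have hv : ((⟨k+1, h⟩ : Fin n) : ℕ) = k+1 := rfl
      rw [h2, Equiv.swap_apply_right, hv, if_neg (by omega), if_pos rfl]
    · rw [Equiv.swap_apply_of_ne_of_ne h1 h2,
        if_neg (fun hh => h1 (Fin.ext hh)), if_neg (fun hh => h2 (Fin.ext hh))]

lemma pt_eq_combo {k : ℕ} (h : k + 1 < n) (σ : Equiv.Perm (Fin n)) (t : ℝ) :
    pt n σ k t = (1-t) • permVec σ + t • permVec (sw n k h * σ) := by
  funext i
  have hsw := swval h σ i
  simp only [Pi.add_apply, Pi.smul_apply, smul_eq_mul, permVec, pt]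
  by_cases h1 : (σ i : ℕ) = k
  · rw [if_pos h1] at hsw
    rw [if_pos h1, hsw, h1]
    push_cast; ring
  · by_cases h2 : (σ i : ℕ) = k+1
    · rw [if_neg h1, if_pos h2] at hsw
      rw [if_neg h1, if_pos h2, hsw, h2]
      push_cast; ring
    · rw [if_neg h1, if_neg h2] at hsw
      rw [if_neg h1, if_neg h2, hsw]
      ring

lemma pt_mem_segment {k : ℕ} (h : k + 1 < n) (σ : Equiv.Perm (Fin n)) {t : ℝ}
    (ht0 : 0 ≤ t) (ht1 : t ≤ 1) :
    pt n σ k t ∈ segment ℝ (permVec σ) (permVec (sw n k h * σ)) :=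
  ⟨1-t, t, by linarith, ht0, by ring, (pt_eq_combo h σ t).symm⟩

lemma mem_segment_pt {k : ℕ} (h : k + 1 < n) (σ : Equiv.Perm (Fin n)) {v : Fin n → ℝ}
    (hv : v ∈ segment ℝ (permVec σ) (permVec (sw n k h * σ))) :
    ∃ t, 0 ≤ t ∧ t ≤ 1 ∧ v = pt n σ k t := by
  obtain ⟨a, b, ha, hb, hab, hv⟩ := hv
  refine ⟨b, hb, by linarith, ?_⟩
  rw [← hv, pt_eq_combo h σ b]
  have : a = 1 - b := by linarith
  rw [this]

lemma pt_symm {k : ℕ} (h : k + 1 < n) (σ : Equiv.Perm (Fin n)) (t : ℝ) :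
    pt n σ k t = pt n (sw n k h * σ) k (1-t) := by
  funext i
  have hsw := swval h σ i
  simp only [pt]
  by_cases h1 : (σ i : ℕ) = k
  · rw [if_pos h1] at hsw
    rw [if_pos h1, hsw, if_neg (by omega), if_pos rfl]
    ring
  · by_cases h2 : (σ i : ℕ) = k+1
    · rw [if_neg h1, if_pos h2] at hsw
      rw [if_neg h1, if_pos h2, hsw, if_pos rfl]
      ring
    · rw [if_neg h1, if_neg h2] at hsw
      rw [if_neg h1, if_neg h2, hsw, if_neg h1, if_neg h2]

lemma skel_eq_iUnion :
    permSkel1 n = ⋃ (σ : Equiv.Perm (Fin n)) (k : ℕ) (h : k + 1 < n),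
      segment ℝ (permVec σ) (permVec (sw n k h * σ)) := rfl

lemma mem_skel_of_seg {k : ℕ} (h : k + 1 < n) (σ : Equiv.Perm (Fin n)) {v : Fin n → ℝ}
    (hv : v ∈ segment ℝ (permVec σ) (permVec (sw n k h * σ))) :
    v ∈ permSkel1 n := by
  rw [skel_eq_iUnion]
  exact Set.mem_iUnion.mpr ⟨σ, Set.mem_iUnion.mpr ⟨k, Set.mem_iUnion.mpr ⟨h, hv⟩⟩⟩

lemma skel_decomp {v : Fin n → ℝ} (hv : v ∈ permSkel1 n) :
    ∃ (σ : Equiv.Perm (Fin n)) (k : ℕ) (h : k + 1 < n) (t : ℝ),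
      0 ≤ t ∧ t ≤ 1/2 ∧ v = pt n σ k t := by
  rw [skel_eq_iUnion] at hv
  simp only [Set.mem_iUnion] at hv
  obtain ⟨σ, k, h, hv⟩ := hv
  obtain ⟨t, ht0, ht1, hvt⟩ := mem_segment_pt h σ hv
  rcases le_total t (1/2) with hhalf|hhalf
  · exact ⟨σ, k, h, t, ht0, hhalf, hvt⟩
  · exact ⟨sw n k h * σ, k, h, 1-t, by linarith, by linarith,
      by rw [hvt, pt_symm h σ t]⟩

end Edge

/-! ### Geometry of the canonical edge configurations -/

section Gpos

variable {n : ℕ} {r : ℝ}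
variable (hn : 2 ≤ n) (hr : 0 < r)
variable (h1 : 1 ≤ 2 * r * ((n : ℝ) - 1)) (h2 : 2 * r * ((n : ℝ) - 2) < 1) (h3 : 2 * r ≤ 1)

/-- sorted position values of the canonical edge configuration -/
noncomputable def yg (n : ℕ) (r : ℝ) (k : ℕ) (t : ℝ) : ℕ → ℝ := fun p =>
  z n r p + 2*t*(cc n r)*((p:ℝ) - ((n:ℝ)-1)*(if k+1 ≤ p then 1 else 0))

lemma gpos_eq (σ : Equiv.Perm (Fin n)) (k : ℕ) (t : ℝ) (i : Fin n) :
    gpos n r σ k t i = yg n r k t ((σ i : ℕ)) := rfl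

include hn hr h1 h2 h3 in
lemma yg_sep {k : ℕ} (hk : k + 1 < n) {t : ℝ} (ht0 : 0 ≤ t) (ht1 : t ≤ 1/2)
    {a b : ℕ} (hab : a < b) (hbn : b < n) (hne : ¬(a = k ∧ b = k+1)) :
    ep n r ≤ yg n r k t b - yg n r k t a := by
  have hcc := cc_nonneg hn h1 h3
  have halcc := al_eq_cc hn h1 h3
  have hal0 := al_nonneg hn h1 h3
  by_cases hb : k+1 ≤ b
  · by_cases ha : k+1 ≤ a
    · -- both above
      have hn3 : 3 ≤ n := by omega
      have heal := ep_le_al hn hr h1 h3 hn3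
      have hba : (1:ℝ) ≤ (b:ℝ) - (a:ℝ) := by
        have : a + 1 ≤ b := hab
        have := (Nat.cast_le (α := ℝ)).mpr this
        push_cast at this ⊢
        linarith
      simp only [yg, z, if_pos ha, if_pos hb]
      nlinarith [mul_nonneg (mul_nonneg ht0 hcc) (by linarith : (0:ℝ) ≤ (b:ℝ) - a - 1)]
    · -- crossing
      have hba2 : a + 2 ≤ b := by omega
      have hn3 : 3 ≤ n := by omega
      have heal := ep_le_al hn hr h1 h3 hn3
      have hn3' : (3:ℝ) ≤ (n:ℝ) := by exact_mod_cast hn3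
      have hba : (2:ℝ) ≤ (b:ℝ) - (a:ℝ) := by
        have := (Nat.cast_le (α := ℝ)).mpr hba2
        push_cast at this ⊢
        linarith
      have hbn' : (b:ℝ) ≤ (n:ℝ) - 1 := by
        have : b + 1 ≤ n := hbn
        have := (Nat.cast_le (α := ℝ)).mpr this
        push_cast at this
        linarith
      simp only [yg, z, if_pos hb, if_neg ha]
      have e1 : 0 ≤ t * cc n r := mul_nonneg ht0 hcc
      have e2 : 0 ≤ (1 - 2*t) * cc n r := mul_nonneg (by linarith) hcc
      nlinarith [mul_nonneg e1 (by linarith : (0:ℝ) ≤ (b:ℝ) - a - 2),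
        mul_nonneg e2 (by linarith : (0:ℝ) ≤ (n:ℝ) - 3)]
  · -- both below (b ≤ k)
    have ha : ¬ (k+1 ≤ a) := by omega
    have hn3 : 3 ≤ n := by omega
    have heal := ep_le_al hn hr h1 h3 hn3
    have hba : (1:ℝ) ≤ (b:ℝ) - (a:ℝ) := by
      have : a + 1 ≤ b := hab
      have := (Nat.cast_le (α := ℝ)).mpr this
      push_cast at this ⊢
      linarith
    simp only [yg, z, if_neg ha, if_neg hb]
    nlinarith [mul_nonneg (mul_nonneg ht0 hcc) (by linarith : (0:ℝ) ≤ (b:ℝ) - a - 1)]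

include hn hr h1 h2 h3 in
lemma yg_pair_gap {k : ℕ} (t : ℝ) :
    yg n r k t (k+1) - yg n r k t k = (1 - 2*t) * al n r := by
  have halcc := al_eq_cc hn h1 h3
  simp only [yg, z, if_pos (le_refl (k+1)), if_neg (by omega : ¬ (k+1 ≤ k))]
  push_cast
  linear_combination (-2*t) * halcc

include hn hr h1 h2 h3 in
lemma gpos_mem_cone (π : Equiv.Perm (Fin n)) {k : ℕ} (hk : k + 1 < n)
    {t : ℝ} (ht0 : 0 ≤ t) (ht1 : t ≤ 1/2) :
    gpos n r π.symm k t ∈ Cone n r π := by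
  have hcc := cc_nonneg hn h1 h3
  have halcc := al_eq_cc hn h1 h3
  have hal0 := al_nonneg hn h1 h3
  have hbeta := beta_le hn h1 h3
  have hyval : ∀ p (h : p < n), ypos n π (gpos n r π.symm k t) p = yg n r k t p := by
    intro p h
    rw [ypos, dif_pos h, gpos_eq, Equiv.symm_apply_apply]
  refine ⟨?_, ?_, ?_⟩
  · rw [hyval 0 (by omega)]
    simp [yg, z]
  · rw [hyval (n-1) (by omega)]
    have hind : k+1 ≤ n-1 := by omega
    have hcast : ((n-1 : ℕ):ℝ) = (n:ℝ) - 1 := by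
      have : (1:ℕ) ≤ n := by omega
      push_cast [this]
      ring
    have hae := al_eq (r := r) hn
    simp only [yg, z, if_pos hind, hcast]
    nlinarith [hae]
  · intro p hp
    rw [hyval (p+1) hp, hyval p (by omega)]
    by_cases hpk : p = k
    · subst hpk
      rw [yg_pair_gap hn hr h1 h2 h3]
      constructor
      · nlinarith
      · nlinarith [al_le hn h1 h3]
    · have hindeq : (if k+1 ≤ p+1 then (1:ℝ) else 0) = (if k+1 ≤ p then 1 else 0) := by
        by_cases hkp : k+1 ≤ p
        · rw [if_pos hkp, if_pos (by omega)]
        · rw [if_neg hkp, if_neg (by omega)]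
      simp only [yg, z, hindeq]
      push_cast
      constructor
      · nlinarith
      · nlinarith

include hn hr h1 h2 h3 in
lemma f_gpos (σ : Equiv.Perm (Fin n)) {k : ℕ} (hk : k + 1 < n)
    {t : ℝ} (ht0 : 0 ≤ t) (ht1 : t ≤ 1/2) :
    f n r (gpos n r σ k t) = pt n σ k (sfun n r (-((1 - 2*t) * al n r))) := by
  have hep := ep_pos (n := n) (r := r) h2
  funext i
  have hre : ∀ j, gpos n r σ k t i - gpos n r σ k t j
      = yg n r k t ((σ i : ℕ)) - yg n r k t ((σ j : ℕ)) := by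
    intro j; rw [gpos_eq, gpos_eq]
  rw [f]
  simp only [hre]
  have hsum : ∑ j, sfun n r (yg n r k t ((σ i : ℕ)) - yg n r k t ((σ j : ℕ)))
      = ∑ q : Fin n, sfun n r (yg n r k t ((σ i : ℕ)) - yg n r k t ((q : ℕ))) :=
    Equiv.sum_comp σ (fun q => sfun n r (yg n r k t ((σ i : ℕ)) - yg n r k t ((q : ℕ))))
  rw [hsum, sumeval hep (yg n r k t) k ((σ i : ℕ)) hk (Fin.isLt _)
    (fun a b hab hbn hne => yg_sep hn hr h1 h2 h3 hk ht0 ht1 hab hbn hne)]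
  have hpair : yg n r k t k - yg n r k t (k+1) = -((1 - 2*t) * al n r) := by
    have := yg_pair_gap (n := n) (r := r) (k := k) hn hr h1 h2 h3 t
    linarith
  rw [hpair, pt]

include hn hr h1 h2 h3 in
lemma f_gpos_bounds {t : ℝ} (ht0 : 0 ≤ t) (ht1 : t ≤ 1/2) :
    0 ≤ sfun n r (-((1 - 2*t) * al n r)) ∧ sfun n r (-((1 - 2*t) * al n r)) ≤ 1/2 := by
  refine ⟨sfun_nonneg _, sfun_nonpos_le_half ?_ (le_of_lt (ep_pos h2))⟩
  have := al_nonneg hn h1 h3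
  nlinarith

end Gpos

/-! ### Evaluation of `g` on edge points -/

section GPt

variable {n : ℕ} {r : ℝ}
variable (hn : 2 ≤ n) (hr : 0 < r)
variable (h1 : 1 ≤ 2 * r * ((n : ℝ) - 1)) (h2 : 2 * r * ((n : ℝ) - 2) < 1) (h3 : 2 * r ≤ 1)

lemma saw_natcast (m : ℕ) : saw ((m:ℕ):ℝ) = 0 := by
  rw [saw, round_natCast]
  simp

lemma round_addt {m : ℕ} {t : ℝ} (h0 : 0 ≤ t) (h : t < 1/2) :
    round (((m:ℕ):ℝ) + t) = (m:ℤ) := by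
  rw [round_eq, Int.floor_eq_iff]
  push_cast
  constructor <;> linarith

lemma round_addhalf (m : ℕ) : round (((m:ℕ):ℝ) + 1/2) = (m:ℤ) + 1 := by
  rw [round_eq, Int.floor_eq_iff]
  push_cast
  constructor <;> linarith

lemma round_subt {m : ℕ} {t : ℝ} (h0 : 0 ≤ t) (h : t ≤ 1/2) :
    round (((m:ℕ):ℝ) - t) = (m:ℤ) := by
  rw [round_eq, Int.floor_eq_iff]
  push_cast
  constructor <;> linarith

lemma saw_addt {m : ℕ} {t : ℝ} (h0 : 0 ≤ t) (h : t ≤ 1/2) :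
    saw (((m:ℕ):ℝ) + t) = t := by
  rcases lt_or_eq_of_le h with h'|h'
  · rw [saw, round_addt h0 h']
    rw [abs_of_nonneg (by push_cast; linarith)]
    push_cast; ring
  · rw [h', saw, round_addhalf]
    rw [abs_of_nonpos (by push_cast; linarith)]
    push_cast; ring

lemma saw_subt {m : ℕ} {t : ℝ} (h0 : 0 ≤ t) (h : t ≤ 1/2) :
    saw (((m:ℕ):ℝ) - t) = t := by
  rw [saw, round_subt h0 h]
  rw [abs_of_nonpos (by push_cast; linarith)]
  push_cast; ring

/-- edge point values as a function of the position -/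
noncomputable def ptv (k : ℕ) (t : ℝ) : ℕ → ℝ := fun m =>
  if m = k then (k:ℝ)+1+t else if m = k+1 then (k:ℝ)+2-t else (m:ℝ)+1

lemma pt_eq_ptv (σ : Equiv.Perm (Fin n)) (k : ℕ) (t : ℝ) (i : Fin n) :
    pt n σ k t i = ptv k t ((σ i : ℕ)) := rfl

lemma sum_ptv {k : ℕ} (hk : k + 1 < n) (σ : Equiv.Perm (Fin n))
    (F : ℝ → ℝ) (c : ℕ → ℝ) (u v : ℝ)
    (hmain : ∀ q : Fin n, F (ptv k t ((q:ℕ))) =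
      c (q:ℕ) + (if q = (⟨k, by omega⟩ : Fin n) then u else 0)
        + (if q = (⟨k+1, hk⟩ : Fin n) then v else 0)) :
    ∀ t', t' = t → ∑ j, F (pt n σ k t j) = (∑ q : Fin n, c (q:ℕ)) + u + v := by
  intro t' _
  have hre : ∑ j, F (pt n σ k t j) = ∑ q : Fin n, F (ptv k t ((q:ℕ))) := by
    simp only [pt_eq_ptv]
    exact Equiv.sum_comp σ (fun q => F (ptv k t ((q:ℕ))))
  rw [hre, Finset.sum_congr rfl (fun q _ => hmain q), Finset.sum_add_distrib,
    Finset.sum_add_distrib, Finset.sum_ite_eq' Finset.univ, Finset.sum_ite_eq' Finset.univ,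
    if_pos (Finset.mem_univ _), if_pos (Finset.mem_univ _)]

lemma sum_saw_pt {k : ℕ} (hk : k + 1 < n) (σ : Equiv.Perm (Fin n))
    {t : ℝ} (ht0 : 0 ≤ t) (ht1 : t ≤ 1/2) :
    ∑ j, saw (pt n σ k t j) = 2*t := by
  have := sum_ptv (t := t) hk σ saw (fun _ => 0) t t (by
    intro q
    by_cases hq : (q:ℕ) = k
    · rw [ptv, if_pos hq, if_pos (Fin.ext hq), if_neg (by
        intro hh
        have hq2 : (q:ℕ) = k+1 := by rw [hh]
        omega)]
      have : (k:ℝ)+1+t = ((k+1:ℕ):ℝ) + t := by push_cast; ring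
      rw [this, saw_addt ht0 ht1]
      ring
    · by_cases hq2 : (q:ℕ) = k+1
      · rw [ptv, if_neg hq, if_pos hq2, if_neg (fun hh => hq (by rw [hh])),
          if_pos (Fin.ext hq2)]
        have : (k:ℝ)+2-t = ((k+2:ℕ):ℝ) - t := by push_cast; ring
        rw [this, saw_subt ht0 ht1]
        ring
      · rw [ptv, if_neg hq, if_neg hq2, if_neg (fun hh => hq (by rw [hh])),
          if_neg (fun hh => hq2 (by rw [hh]))]
        have : ((q:ℕ):ℝ)+1 = (((q:ℕ)+1:ℕ):ℝ) := by push_cast; ring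
        rw [this, saw_natcast]
        ring) t rfl
  rw [this]
  simp
  ring

lemma sum_sq_pt {k : ℕ} (hk : k + 1 < n) (σ : Equiv.Perm (Fin n)) (t : ℝ) :
    ∑ j, (pt n σ k t j)^2 = SQ n - 2*t*(1-t) := by
  have := sum_ptv (t := t) hk σ (fun x => x^2) (fun m => ((m:ℝ)+1)^2)
    (((k:ℝ)+1+t)^2 - ((k:ℝ)+1)^2) (((k:ℝ)+2-t)^2 - ((k:ℝ)+2)^2) (by
    intro q
    by_cases hq : (q:ℕ) = k
    · rw [ptv, if_pos hq, if_pos (Fin.ext hq), if_neg (by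
        intro hh
        have hq2 : (q:ℕ) = k+1 := by rw [hh]
        omega), hq]
      ring
    · by_cases hq2 : (q:ℕ) = k+1
      · rw [ptv, if_neg hq, if_pos hq2, if_neg (fun hh => hq (by rw [hh])),
          if_pos (Fin.ext hq2), hq2]
        push_cast; ring
      · rw [ptv, if_neg hq, if_neg hq2, if_neg (fun hh => hq (by rw [hh])),
          if_neg (fun hh => hq2 (by rw [hh]))]
        ring) t rfl
  rw [this]
  have hSQ : ∑ q : Fin n, (((q:ℕ):ℝ)+1)^2 = SQ n :=
    Fin.sum_univ_eq_sum_range (fun p => ((p:ℝ)+1)^2) n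
  rw [hSQ]
  ring

lemma sum_cb_pt {k : ℕ} (hk : k + 1 < n) (σ : Equiv.Perm (Fin n)) (t : ℝ) :
    ∑ j, (pt n σ k t j)^3 = CB n - 3*t*(1-t)*(2*(k:ℝ)+3) := by
  have := sum_ptv (t := t) hk σ (fun x => x^3) (fun m => ((m:ℝ)+1)^3)
    (((k:ℝ)+1+t)^3 - ((k:ℝ)+1)^3) (((k:ℝ)+2-t)^3 - ((k:ℝ)+2)^3) (by
    intro q
    by_cases hq : (q:ℕ) = k
    · rw [ptv, if_pos hq, if_pos (Fin.ext hq), if_neg (by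
        intro hh
        have hq2 : (q:ℕ) = k+1 := by rw [hh]
        omega), hq]
      ring
    · by_cases hq2 : (q:ℕ) = k+1
      · rw [ptv, if_neg hq, if_pos hq2, if_neg (fun hh => hq (by rw [hh])),
          if_pos (Fin.ext hq2), hq2]
        push_cast; ring
      · rw [ptv, if_neg hq, if_neg hq2, if_neg (fun hh => hq (by rw [hh])),
          if_neg (fun hh => hq2 (by rw [hh]))]
        ring) t rfl
  rw [this]
  have hCB : ∑ q : Fin n, (((q:ℕ):ℝ)+1)^3 = CB n :=
    Fin.sum_univ_eq_sum_range (fun p => ((p:ℝ)+1)^3) n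
  rw [hCB]
  ring

lemma kval_pt {k : ℕ} (hk : k + 1 < n) (σ : Equiv.Perm (Fin n))
    {t : ℝ} (ht0 : 0 < t) (ht1 : t ≤ 1/2) :
    kval n (pt n σ k t) = k := by
  have htt : t*(1-t) ≠ 0 := ne_of_gt (mul_pos ht0 (by linarith))
  rw [kval, sum_sq_pt hk σ t, sum_cb_pt hk σ t]
  have e1 : CB n - (CB n - 3*t*(1-t)*(2*(k:ℝ)+3)) = 3*(t*(1-t))*(2*(k:ℝ)+3) := by ring
  have e2 : 3*((SQ n - (SQ n - 2*t*(1-t)))/2) = 3*(t*(1-t)) := by ring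
  rw [e1, e2]
  have e3 : 3*(t*(1-t))*(2*(k:ℝ)+3) / (3*(t*(1-t))) = 2*(k:ℝ)+3 := by
    field_simp
    exact div_self (by linarith : (0:ℝ) < 1 - t).ne'
  rw [e3]
  have e4 : (2*(k:ℝ)+3-3)/2 = ((k:ℕ):ℝ) := by push_cast; ring
  rw [e4, round_natCast]
  exact Int.toNat_natCast k

include hn h1 h3 in
lemma g_pt (σ : Equiv.Perm (Fin n)) {k : ℕ} (hk : k + 1 < n)
    {t : ℝ} (ht0 : 0 ≤ t) (ht1 : t ≤ 1/2) :
    g n r (pt n σ k t) = gpos n r σ k t := by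
  have halcc := al_eq_cc hn h1 h3
  funext i
  rw [g, sum_saw_pt hk σ ht0 ht1]
  rcases eq_or_lt_of_le ht0 with h0|h0
  · -- t = 0
    subst h0
    simp only [mul_zero, zero_mul, mul_comm]
    rw [gpos]
    simp only [mul_zero, zero_mul, mul_comm, add_zero]
    congr 1
    rw [pt_eq_ptv]
    by_cases hm : ((σ i : ℕ)) = k
    · rw [ptv, if_pos hm, hm]
      have hc : (k:ℝ)+1+0 = ((k+1:ℕ):ℝ) + 0 := by push_cast; ring
      rw [hc, round_addt (le_refl 0) (by norm_num)]
      omega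
    · by_cases hm2 : ((σ i : ℕ)) = k+1
      · rw [ptv, if_neg hm, if_pos hm2, hm2]
        have hc : (k:ℝ)+2-0 = ((k+2:ℕ):ℝ) - 0 := by push_cast; ring
        rw [hc, round_subt (le_refl 0) (by norm_num)]
        omega
      · rw [ptv, if_neg hm, if_neg hm2]
        have hc : ((σ i:ℕ):ℝ)+1 = (((σ i:ℕ)+1:ℕ):ℝ) + 0 := by push_cast; ring
        rw [hc, round_addt (le_refl 0) (by norm_num)]
        omega
  · -- 0 < t
    rw [kval_pt hk σ h0 ht1]
    rw [pt_eq_ptv, gpos]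
    by_cases hm : (σ i : ℕ) = k
    · rw [ptv, if_pos hm, hm]
      rcases lt_or_eq_of_le ht1 with hh|hh
      · have hc : (k:ℝ)+1+t = ((k+1:ℕ):ℝ) + t := by push_cast; ring
        rw [hc, round_addt (le_of_lt h0) hh]
        have htn : (((k+1:ℕ):ℤ) - 1).toNat = k := by omega
        rw [htn, if_neg (by omega : ¬ (k+1 ≤ k))]
      · have hc : (k:ℝ)+1+t = ((k+1:ℕ):ℝ) + 1/2 := by rw [hh]; push_cast; ring
        rw [hc, round_addhalf]
        have htn : ((((k+1:ℕ)):ℤ) + 1 - 1).toNat = k+1 := by omega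
        rw [htn, if_pos (by omega : k+1 ≤ k+1), if_neg (by omega : ¬ (k+1 ≤ k))]
        subst hh
        simp only [z]
        push_cast
        linear_combination (-1 : ℝ) * halcc
    · by_cases hm2 : (σ i : ℕ) = k+1
      · rw [ptv, if_neg hm, if_pos hm2, hm2]
        have hc : (k:ℝ)+2-t = ((k+2:ℕ):ℝ) - t := by push_cast; ring
        rw [hc, round_subt (le_of_lt h0) ht1]
        have htn : (((k+2:ℕ):ℤ) - 1).toNat = k+1 := by omega
        rw [htn, if_pos (by omega : k+1 ≤ k+1)]
      · rw [ptv, if_neg hm, if_neg hm2]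
        have hc : ((σ i : ℕ):ℝ)+1 = (((σ i : ℕ)+1:ℕ):ℝ) + 0 := by push_cast; ring
        rw [hc, round_addt (le_refl 0) (by norm_num)]
        have htn : ((((σ i : ℕ)+1:ℕ):ℤ) - 1).toNat = (σ i : ℕ) := by omega
        rw [htn]

end GPt

/-! ### The cone of sorted configurations -/

section Cone

variable {n : ℕ} {r : ℝ}
variable (hn : 2 ≤ n) (hr : 0 < r)
variable (h1 : 1 ≤ 2 * r * ((n : ℝ) - 1)) (h2 : 2 * r * ((n : ℝ) - 2) < 1) (h3 : 2 * r ≤ 1)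

lemma ypos_eq (π : Equiv.Perm (Fin n)) (x : Fin n → ℝ) {p : ℕ} (h : p < n) :
    ypos n π x p = x (π ⟨p, h⟩) := dif_pos h

lemma cone_ymono (π : Equiv.Perm (Fin n)) {x : Fin n → ℝ} (hx : x ∈ Cone n r π) :
    ∀ a b, a ≤ b → b < n → ypos n π x a ≤ ypos n π x b := by
  intro a b hab hbn
  induction b with
  | zero =>
    have : a = 0 := by omega
    rw [this]
  | succ m ih =>
    rcases Nat.lt_or_ge a (m+1) with h|h
    · have h1 := ih (by omega) (by omega)
      have h2 := (hx.2.2 m hbn).1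
      linarith
    · have : a = m+1 := by omega
      rw [this]

include hn hr h3 in
lemma cone_subset_covI (π : Equiv.Perm (Fin n)) : Cone n r π ⊆ CovI n r := by
  intro x hx
  obtain ⟨hy0, hyt, hstep⟩ := hx
  have hx' : x ∈ Cone n r π := ⟨hy0, hyt, hstep⟩
  have hbound : ∀ p, p < n → r ≤ ypos n π x p ∧ ypos n π x p ≤ 1 - r := by
    intro p hp
    constructor
    · rw [← hy0]; exact cone_ymono π hx' 0 p (by omega) hp
    · rw [← hyt]; exact cone_ymono π hx' p (n-1) (by omega) (by omega)
  have hxb : ∀ i, r ≤ x i ∧ x i ≤ 1 - r := by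
    intro i
    have h := hbound ((π.symm i : ℕ)) (Fin.isLt _)
    rwa [ypos_eq π x (Fin.isLt _), Fin.eta, Equiv.apply_symm_apply] at h
  constructor
  · intro i
    exact Set.Icc_subset_Icc (by linarith [(hxb i).1]) (by linarith [(hxb i).2])
  · intro u hu
    obtain ⟨hu0, hu1⟩ := hu
    have key : ∀ m, m < n → u ≤ ypos n π x m + r →
        u ∈ ⋃ i, Set.Icc (x i - r) (x i + r) := by
      intro m
      induction m with
      | zero =>
        intro hm hum
        refine Set.mem_iUnion.mpr ⟨π ⟨0, hm⟩, ?_⟩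
        rw [← ypos_eq π x hm, hy0]
        exact ⟨by linarith, by rwa [hy0] at hum⟩
      | succ m ih =>
        intro hm hum
        rcases le_or_gt u (ypos n π x m + r) with h|h
        · exact ih (by omega) h
        · refine Set.mem_iUnion.mpr ⟨π ⟨m+1, hm⟩, ?_⟩
          rw [← ypos_eq π x hm]
          have := (hstep m hm).2
          exact ⟨by linarith, by linarith⟩
    exact key (n-1) (by omega) (by rw [hyt]; linarith)

include hn in
lemma cone_comb (π : Equiv.Perm (Fin n)) {a b : Fin n → ℝ}
    (ha : a ∈ Cone n r π) (hb : b ∈ Cone n r π) {u : ℝ} (hu0 : 0 ≤ u) (hu1 : u ≤ 1) :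
    (fun i => (1-u) * a i + u * b i) ∈ Cone n r π := by
  have hyc : ∀ p (h : p < n),
      ypos n π (fun i => (1-u) * a i + u * b i) p
        = (1-u) * ypos n π a p + u * ypos n π b p := by
    intro p h
    rw [ypos_eq π _ h, ypos_eq π _ h, ypos_eq π _ h]
  refine ⟨?_, ?_, ?_⟩
  · rw [hyc 0 (by omega), ha.1, hb.1]; ring
  · rw [hyc (n-1) (by omega), ha.2.1, hb.2.1]; ring
  · intro p hp
    rw [hyc (p+1) hp, hyc p (by omega)]
    have h1 := ha.2.2 p hp
    have h2 := hb.2.2 p hp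
    constructor
    · nlinarith [h1.1, h2.1]
    · nlinarith [h1.2, h2.2]

include hn hr h1 h2 h3 in
lemma covI_decomp {x : Fin n → ℝ} (hx : x ∈ CovI n r) :
    ∃ (π : Equiv.Perm (Fin n)) (k : ℕ) (t : ℝ), k + 1 < n ∧ 0 ≤ t ∧ t ≤ 1/2 ∧
      x ∈ Cone n r π ∧ f n r x = pt n π.symm k t := by
  have hep := ep_pos (n := n) (r := r) h2
  obtain ⟨hcont, hcov⟩ := hx
  have hlb : ∀ i, r ≤ x i := by
    intro i
    have := (hcont i ⟨le_refl _, by linarith⟩).1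
    linarith
  have hub : ∀ i, x i ≤ 1 - r := by
    intro i
    have := (hcont i ⟨by linarith, le_refl _⟩).2
    linarith
  set π := Tuple.sort x with hπ
  have hmono := Tuple.monotone_sort x
  have hyeq : ∀ p (h : p < n), ypos n π x p = x (π ⟨p, h⟩) := fun p h => dif_pos h
  have ymono : ∀ a b, a ≤ b → b < n → ypos n π x a ≤ ypos n π x b := by
    intro a b hab hbn
    rw [hyeq a (by omega), hyeq b hbn]
    exact hmono (by exact Fin.mk_le_mk.mpr hab)
  have hxy : ∀ i, x i = ypos n π x ((π.symm i : ℕ)) := by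
    intro i
    rw [hyeq _ (Fin.isLt _), Fin.eta, Equiv.apply_symm_apply]
  have y0 : ypos n π x 0 = r := by
    obtain ⟨i, hi⟩ := Set.mem_iUnion.mp
      (hcov (⟨le_refl 0, by norm_num⟩ : (0:ℝ) ∈ Set.Icc (0:ℝ) 1))
    have hxi : x i = r := le_antisymm (by linarith [hi.1]) (hlb i)
    have hle : ypos n π x 0 ≤ x i := by
      rw [hxy i]; exact ymono 0 _ (by omega) (Fin.isLt _)
    have hge : r ≤ ypos n π x 0 := by
      rw [hyeq 0 (by omega)]; exact hlb _
    linarith [hxi ▸ hle]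
  have ytop : ypos n π x (n-1) = 1 - r := by
    obtain ⟨i, hi⟩ := Set.mem_iUnion.mp
      (hcov (⟨by norm_num, le_refl 1⟩ : (1:ℝ) ∈ Set.Icc (0:ℝ) 1))
    have hxi : x i = 1 - r := le_antisymm (hub i) (by linarith [hi.2])
    have hle : x i ≤ ypos n π x (n-1) := by
      rw [hxy i]; exact ymono _ (n-1) (by omega) (by omega)
    have hge : ypos n π x (n-1) ≤ 1 - r := by
      rw [hyeq (n-1) (by omega)]; exact hub _
    linarith [hxi ▸ hle]
  have gap0 : ∀ p, p + 1 < n → 0 ≤ ypos n π x (p+1) - ypos n π x p := by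
    intro p hp
    have := ymono p (p+1) (by omega) hp
    linarith
  have gap_le : ∀ p, p + 1 < n → ypos n π x (p+1) - ypos n π x p ≤ 2*r := by
    intro p hp
    by_contra hgap
    push_neg at hgap
    set u := (ypos n π x p + ypos n π x (p+1))/2 with hu
    have hyplb : r ≤ ypos n π x p := by
      rw [← y0]; exact ymono 0 p (by omega) (by omega)
    have hypub : ypos n π x (p+1) ≤ 1 - r := by
      rw [← ytop]; exact ymono (p+1) (n-1) (by omega) (by omega)
    obtain ⟨i, hi⟩ := Set.mem_iUnion.mp
      (hcov (⟨by linarith, by linarith⟩ : u ∈ Set.Icc (0:ℝ) 1))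
    rcases le_or_gt ((π.symm i : ℕ)) p with hq|hq
    · have : x i ≤ ypos n π x p := by
        rw [hxy i]; exact ymono _ p hq (by omega)
      have := hi.2
      simp only [hu] at this ⊢
      linarith
    · have : ypos n π x (p+1) ≤ x i := by
        rw [hxy i]; exact ymono (p+1) _ hq (Fin.isLt _)
      have := hi.1
      simp only [hu] at this ⊢
      linarith
  have hxcone : x ∈ Cone n r π := ⟨y0, ytop, fun p hp => ⟨gap0 p hp, gap_le p hp⟩⟩
  -- telescoping sum of the gaps
  have htel : ∑ j ∈ Finset.range (n-1), (ypos n π x (j+1) - ypos n π x j) = 1 - 2*r := by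
    rw [Finset.sum_range_sub (f := ypos n π x) (n := n-1)]
    have h0 : (0:ℕ) < n := by omega
    rw [y0, ytop]
    ring
  have atmost1 : ∀ a b, a + 1 < n → b + 1 < n → a ≠ b →
      ypos n π x (a+1) - ypos n π x a < ep n r →
      ypos n π x (b+1) - ypos n π x b < ep n r → False := by
    intro a b han hbn hab hsa hsb
    set h := fun j => 2*r - (ypos n π x (j+1) - ypos n π x j) with hh
    have hnonneg : ∀ j ∈ Finset.range (n-1), 0 ≤ h j := by
      intro j hj
      rw [Finset.mem_range] at hj
      have := gap_le j (by omega)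
      simp only [hh]
      linarith
    have hsub : ({a, b} : Finset ℕ) ⊆ Finset.range (n-1) := by
      intro j hj
      rw [Finset.mem_insert, Finset.mem_singleton] at hj
      rw [Finset.mem_range]
      rcases hj with h|h <;> omega
    have hsum2 : ∑ j ∈ ({a, b} : Finset ℕ), h j ≤ ∑ j ∈ Finset.range (n-1), h j :=
      Finset.sum_le_sum_of_subset_of_nonneg hsub (fun j hj _ => hnonneg j hj)
    rw [Finset.sum_pair hab] at hsum2
    have htot : ∑ j ∈ Finset.range (n-1), h j = ((n-1:ℕ):ℝ)*(2*r) - (1 - 2*r) := by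
      simp only [hh]
      rw [Finset.sum_sub_distrib, htel, Finset.sum_const, Finset.card_range,
        nsmul_eq_mul]
    have hcast : ((n-1:ℕ):ℝ) = (n:ℝ) - 1 := by
      have : (1:ℕ) ≤ n := by omega
      push_cast [this]
      ring
    rw [hcast] at htot
    have hea : 2*r - ep n r < h a := by simp only [hh]; linarith
    have heb : 2*r - ep n r < h b := by simp only [hh]; linarith
    rw [ep] at hea heb
    have hfin : h a + h b ≤ ((n:ℝ)-1)*(2*r) - (1 - 2*r) := htot ▸ hsum2
    simp only [hh] at hea heb hfin
    linarith
  -- choose the small-gap position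
  have hkchoice : ∃ k, k + 1 < n ∧ ∀ j, j + 1 < n → j ≠ k →
      ep n r ≤ ypos n π x (j+1) - ypos n π x j := by
    by_cases hex : ∃ p, p + 1 < n ∧ ypos n π x (p+1) - ypos n π x p < ep n r
    · obtain ⟨k, hk, hks⟩ := hex
      refine ⟨k, hk, fun j hj hne => ?_⟩
      by_contra hcon
      push_neg at hcon
      exact atmost1 j k hj hk hne hcon hks
    · push_neg at hex
      exact ⟨0, by omega, fun j hj _ => hex j hj⟩
  obtain ⟨k, hk, hothers⟩ := hkchoice
  have hsep : ∀ a b, a < b → b < n → ¬(a = k ∧ b = k+1) →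
      ep n r ≤ ypos n π x b - ypos n π x a := by
    intro a b hab hbn hne
    have hexj : ∃ j, a ≤ j ∧ j + 1 ≤ b ∧ j ≠ k := by
      by_cases hj1 : b ≤ k
      · exact ⟨a, le_refl a, hab, by omega⟩
      · by_cases hj2 : k < a
        · exact ⟨a, le_refl a, hab, by omega⟩
        · by_cases hj3 : a < k
          · exact ⟨a, le_refl a, hab, by omega⟩
          · -- a = k, so b ≥ k+2
            have hak : a = k := by omega
            have hb2 : k + 2 ≤ b := by omega
            exact ⟨k+1, by omega, by omega, by omega⟩
    obtain ⟨j, hja, hjb, hjk⟩ := hexj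
    have e1 := ymono a j hja (by omega)
    have e2 := hothers j (by omega) hjk
    have e3 := ymono (j+1) b hjb hbn
    linarith
  refine ⟨π, k, sfun n r (ypos n π x k - ypos n π x (k+1)), hk, sfun_nonneg _, ?_, hxcone, ?_⟩
  · exact sfun_nonpos_le_half (by linarith [ymono k (k+1) (by omega) hk]) (le_of_lt hep)
  · funext i
    rw [f, pt]
    have hsum : ∑ j, sfun n r (x i - x j)
        = ∑ q : Fin n, sfun n r (ypos n π x ((π.symm i : ℕ)) - ypos n π x ((q:ℕ))) := by
      rw [← Equiv.sum_comp π (fun j => sfun n r (x i - x j))]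
      apply Finset.sum_congr rfl
      intro q _
      rw [← hxy i, hyeq ((q:ℕ)) q.isLt, Fin.eta]
    rw [hsum, sumeval hep (ypos n π x) k ((π.symm i : ℕ)) hk (Fin.isLt _) hsep]

end Cone

/-! ### Continuity -/

section Continuity

variable {n : ℕ} {r : ℝ}
variable (hn : 2 ≤ n) (hr : 0 < r)
variable (h1 : 1 ≤ 2 * r * ((n : ℝ) - 1)) (h2 : 2 * r * ((n : ℝ) - 2) < 1) (h3 : 2 * r ≤ 1)

lemma sfun_cont : Continuous (sfun n r) := by
  unfold sfun
  exact continuous_const.max (continuous_const.min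
    (continuous_const.add (continuous_id.div_const _)))

lemma f_cont : Continuous (f n r) := by
  unfold f
  exact continuous_pi fun i => continuous_const.add <|
    continuous_finset_sum _ fun j _ =>
      sfun_cont.comp ((continuous_apply i).sub (continuous_apply j))

lemma gpos_cont (σ : Equiv.Perm (Fin n)) (k : ℕ) :
    Continuous (fun t => gpos n r σ k t) := by
  unfold gpos
  exact continuous_pi fun i => continuous_const.add <|
    (((continuous_const.mul continuous_id).mul continuous_const).mul continuous_const)

include hn h1 h3 in
lemma gpos_mid {k : ℕ} (hk : k + 1 < n) (σ : Equiv.Perm (Fin n)) :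
    gpos n r σ k (1/2) = gpos n r (sw n k hk * σ) k (1/2) := by
  have halcc := al_eq_cc hn h1 h3
  funext i
  have hsw := swval hk σ i
  simp only [gpos]
  by_cases hm : (σ i : ℕ) = k
  · rw [if_pos hm] at hsw
    rw [hsw, hm, if_neg (by omega : ¬ (k+1 ≤ k)), if_pos (by omega : k+1 ≤ k+1)]
    simp only [z]
    push_cast
    linear_combination halcc
  · by_cases hm2 : (σ i : ℕ) = k+1
    · rw [if_neg hm, if_pos hm2] at hsw
      rw [hsw, hm2, if_pos (by omega : k+1 ≤ k+1), if_neg (by omega : ¬ (k+1 ≤ k))]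
      simp only [z]
      push_cast
      linear_combination -halcc
    · rw [if_neg hm, if_neg hm2] at hsw
      rw [hsw]

include hn h1 h3 in
lemma g_contOn_seg {k : ℕ} (hk : k + 1 < n) (σ : Equiv.Perm (Fin n)) :
    ContinuousOn (g n r) (segment ℝ (permVec σ) (permVec (sw n k hk * σ))) := by
  classical
  set i0 := σ.symm (⟨k, Nat.lt_of_succ_lt hk⟩ : Fin n) with hi0
  set Φ : ℝ → (Fin n → ℝ) := fun u =>
    if u ≤ 1/2 then gpos n r σ k u else gpos n r (sw n k hk * σ) k (1-u) with hΦ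
  have hΦc : Continuous Φ := by
    apply Continuous.if_le (gpos_cont σ k)
      ((gpos_cont (sw n k hk * σ) k).comp (continuous_const.sub continuous_id))
      continuous_id continuous_const
    intro u hu
    simp only [id_eq] at hu
    subst hu
    show gpos n r σ k (1/2) = gpos n r (sw n k hk * σ) k (1 - 1/2)
    have h12 : (1:ℝ) - 1/2 = 1/2 := by norm_num
    rw [h12]
    exact gpos_mid hn h1 h3 hk σ
  have heq : ∀ v ∈ segment ℝ (permVec σ) (permVec (sw n k hk * σ)),
      g n r v = Φ (v i0 - ((k:ℝ)+1)) := by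
    intro v hv
    obtain ⟨t, ht0, ht1, hvt⟩ := mem_segment_pt hk σ hv
    have hσi0 : (σ i0 : ℕ) = k := by
      rw [hi0, Equiv.apply_symm_apply]
    have hvi0 : v i0 = (k:ℝ)+1+t := by
      rw [hvt, pt, if_pos hσi0]
    rw [hvi0]
    have harg : (k:ℝ)+1+t - ((k:ℝ)+1) = t := by ring
    rw [harg]
    rcases le_or_gt t (1/2) with hle|hgt
    · rw [hΦ]
      simp only
      rw [if_pos hle, hvt]
      exact g_pt hn h1 h3 σ hk ht0 hle
    · rw [hΦ]
      simp only
      rw [if_neg (not_le.mpr hgt), hvt, pt_symm hk σ t]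
      exact g_pt hn h1 h3 (sw n k hk * σ) hk (by linarith) (by linarith)
  exact ContinuousOn.congr (hΦc.comp
    (((continuous_apply i0).sub continuous_const))).continuousOn heq

lemma seg_isClosed (a b : Fin n → ℝ) : IsClosed (segment ℝ a b) := by
  rw [segment_eq_image]
  exact (isCompact_Icc.image
    (((continuous_const.sub continuous_id).smul continuous_const).add
      (continuous_id.smul continuous_const))).isClosed

lemma contOn_iUnion_fintype {X Y ι : Type*} [TopologicalSpace X] [TopologicalSpace Y] [Fintype ι]
    {C : ι → Set X} (hc : ∀ i, IsClosed (C i)) {φ : X → Y}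
    (h : ∀ i, ContinuousOn φ (C i)) : ContinuousOn φ (⋃ i, C i) := by
  classical
  intro x hx
  have key : ∀ s : Finset ι, ContinuousWithinAt φ (⋃ i ∈ s, C i) x := by
    intro s
    induction s using Finset.induction with
    | empty =>
      have he : ⋃ i ∈ (∅ : Finset ι), C i = (∅ : Set X) := by
        ext y; simp
      rw [he, ContinuousWithinAt, nhdsWithin_empty]
      exact Filter.tendsto_bot
    | @insert a s _ ih =>
      rw [Finset.set_biUnion_insert]
      apply ContinuousWithinAt.union ?_ ih
      by_cases hxa : x ∈ C a
      · exact (h a) x hxa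
      · exact continuousWithinAt_of_notMem_closure (by rwa [(hc a).closure_eq])
  have := key Finset.univ
  rwa [show ⋃ i ∈ (Finset.univ : Finset ι), C i = ⋃ i, C i by
    simp] at this

include hn in
lemma fin_succ_lt (j : Fin (n-1)) : (j : ℕ) + 1 < n := by
  have := j.isLt
  omega

include hn in
lemma skel_eq_iUnion_fintype :
    permSkel1 n = ⋃ e : Equiv.Perm (Fin n) × Fin (n-1),
      segment ℝ (permVec e.1) (permVec (sw n (e.2 : ℕ) (fin_succ_lt hn e.2) * e.1)) := by
  rw [skel_eq_iUnion]
  apply Set.eq_of_subset_of_subset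
  · intro v hv
    simp only [Set.mem_iUnion] at hv ⊢
    obtain ⟨σ, k, hkn, hseg⟩ := hv
    exact ⟨(σ, ⟨k, by omega⟩), hseg⟩
  · intro v hv
    simp only [Set.mem_iUnion] at hv ⊢
    obtain ⟨e, hseg⟩ := hv
    exact ⟨e.1, (e.2 : ℕ), fin_succ_lt hn e.2, hseg⟩

include hn h1 h3 in
lemma g_contOn : ContinuousOn (g n r) (permSkel1 n) := by
  rw [skel_eq_iUnion_fintype hn]
  exact contOn_iUnion_fintype (fun e => seg_isClosed _ _)
    (fun e => g_contOn_seg hn h1 h3 (fin_succ_lt hn e.2) e.1)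

end Continuity

/-! ### Membership lemmas for the assembly -/

section Mem

variable {n : ℕ} {r : ℝ}
variable (hn : 2 ≤ n) (hr : 0 < r)
variable (h1 : 1 ≤ 2 * r * ((n : ℝ) - 1)) (h2 : 2 * r * ((n : ℝ) - 2) < 1) (h3 : 2 * r ≤ 1)

include hn hr h1 h2 h3 in
lemma memF {x : Fin n → ℝ} (hx : x ∈ CovI n r) : f n r x ∈ permSkel1 n := by
  obtain ⟨π, k, t, hk, ht0, ht1, hc, hfx⟩ := covI_decomp hn hr h1 h2 h3 hx
  rw [hfx]
  exact mem_skel_of_seg hk _ (pt_mem_segment hk _ ht0 (by linarith))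

include hn hr h1 h2 h3 in
lemma memG {v : Fin n → ℝ} (hv : v ∈ permSkel1 n) : g n r v ∈ CovI n r := by
  obtain ⟨σ, k, hk, t, ht0, ht1, hvt⟩ := skel_decomp hv
  rw [hvt, g_pt hn h1 h3 σ hk ht0 ht1]
  have hmem := gpos_mem_cone hn hr h1 h2 h3 σ.symm hk ht0 ht1
  rw [Equiv.symm_symm] at hmem
  exact cone_subset_covI hn hr h3 σ.symm hmem

include hn hr h1 h2 h3 in
lemma left_key {x : Fin n → ℝ} (hx : x ∈ CovI n r) :
    ∃ π, x ∈ Cone n r π ∧ g n r (f n r x) ∈ Cone n r π := by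
  obtain ⟨π, k, t, hk, ht0, ht1, hc, hfx⟩ := covI_decomp hn hr h1 h2 h3 hx
  refine ⟨π, hc, ?_⟩
  rw [hfx, g_pt hn h1 h3 π.symm hk ht0 ht1]
  exact gpos_mem_cone hn hr h1 h2 h3 π hk ht0 ht1

include hn hr h1 h2 h3 in
lemma right_key {v : Fin n → ℝ} (hv : v ∈ permSkel1 n) :
    ∃ (σ : Equiv.Perm (Fin n)) (k : ℕ) (hk : k+1 < n),
      v ∈ segment ℝ (permVec σ) (permVec (sw n k hk * σ)) ∧
      f n r (g n r v) ∈ segment ℝ (permVec σ) (permVec (sw n k hk * σ)) := by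
  obtain ⟨σ, k, hk, t, ht0, ht1, hvt⟩ := skel_decomp hv
  refine ⟨σ, k, hk, by rw [hvt]; exact pt_mem_segment hk σ ht0 (by linarith), ?_⟩
  rw [hvt, g_pt hn h1 h3 σ hk ht0 ht1, f_gpos hn hr h1 h2 h3 σ hk ht0 ht1]
  obtain ⟨hb0, hb1⟩ := f_gpos_bounds hn hr h1 h2 h3 ht0 ht1
  exact pt_mem_segment hk σ hb0 (by linarith)

end Mem

end CovPermAux

open CovPermAux

theorem covI_excess_one_homotopyEquiv_permutahedron_skeleton
    (n : ℕ) (hn : 2 ≤ n) (r : ℝ) (hr : 0 < r)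
    (h1 : 1 ≤ 2 * r * ((n : ℝ) - 1)) (h2 : 2 * r * ((n : ℝ) - 2) < 1)
    (h3 : 2 * r ≤ 1) :
    Nonempty (ContinuousMap.HomotopyEquiv (CovI n r) (permSkel1 n)) := by
  classical
  let F : C(CovI n r, permSkel1 n) :=
    ⟨fun x => ⟨f n r x.1, memF hn hr h1 h2 h3 x.2⟩,
      Continuous.subtype_mk (f_cont.comp continuous_subtype_val) _⟩
  let G : C(permSkel1 n, CovI n r) :=
    ⟨fun v => ⟨g n r v.1, memG hn hr h1 h2 h3 v.2⟩,
      Continuous.subtype_mk ((g_contOn hn h1 h3).restrict) _⟩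
  have hGF : Continuous fun q : unitInterval × (CovI n r) => g n r (f n r q.2.1) :=
    (continuous_subtype_val.comp (G.comp F).continuous).comp continuous_snd
  have hFG : Continuous fun q : unitInterval × (permSkel1 n) => f n r (g n r q.2.1) :=
    (continuous_subtype_val.comp (F.comp G).continuous).comp continuous_snd
  let HL : ContinuousMap.Homotopy (G.comp F) (ContinuousMap.id (CovI n r)) :=
    { toFun := fun q =>
        ⟨fun i => (1 - (q.1 : ℝ)) * g n r (f n r q.2.1) i + (q.1 : ℝ) * q.2.1 i, by
          obtain ⟨π, hc1, hc2⟩ := left_key hn hr h1 h2 h3 q.2.2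
          exact cone_subset_covI hn hr h3 π (cone_comb hn π hc2 hc1 q.1.2.1 q.1.2.2)⟩
      continuous_toFun := by
        apply Continuous.subtype_mk
        apply continuous_pi
        intro i
        apply Continuous.add
        · exact (continuous_const.sub
            (continuous_subtype_val.comp continuous_fst)).mul ((continuous_apply i).comp hGF)
        · exact (continuous_subtype_val.comp continuous_fst).mul
            ((continuous_apply i).comp (continuous_subtype_val.comp continuous_snd))
      map_zero_left := by
        intro x
        apply Subtype.ext
        funext i
        show (1 - ((0:unitInterval):ℝ)) * _ + ((0:unitInterval):ℝ) * _ = _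
        norm_num
        rfl
      map_one_left := by
        intro x
        apply Subtype.ext
        funext i
        show (1 - ((1:unitInterval):ℝ)) * _ + ((1:unitInterval):ℝ) * _ = _
        norm_num }
  let HR : ContinuousMap.Homotopy (F.comp G) (ContinuousMap.id (permSkel1 n)) :=
    { toFun := fun q =>
        ⟨fun i => (1 - (q.1 : ℝ)) * f n r (g n r q.2.1) i + (q.1 : ℝ) * q.2.1 i, by
          obtain ⟨σ, k, hk, hv, hfg⟩ := right_key hn hr h1 h2 h3 q.2.2
          apply mem_skel_of_seg hk σ
          have hform : (fun i => (1 - (q.1 : ℝ)) * f n r (g n r q.2.1) i + (q.1 : ℝ) * q.2.1 i)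
              = (1 - (q.1 : ℝ)) • (f n r (g n r q.2.1)) + (q.1 : ℝ) • q.2.1 := by
            funext i
            simp [Pi.smul_apply, smul_eq_mul]
          rw [hform]
          exact (convex_segment _ _) hfg hv (by linarith [q.1.2.2]) q.1.2.1
            (by ring)⟩
      continuous_toFun := by
        apply Continuous.subtype_mk
        apply continuous_pi
        intro i
        apply Continuous.add
        · exact (continuous_const.sub
            (continuous_subtype_val.comp continuous_fst)).mul ((continuous_apply i).comp hFG)
        · exact (continuous_subtype_val.comp continuous_fst).mul
            ((continuous_apply i).comp (continuous_subtype_val.comp continuous_snd))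
      map_zero_left := by
        intro v
        apply Subtype.ext
        funext i
        show (1 - ((0:unitInterval):ℝ)) * _ + ((0:unitInterval):ℝ) * _ = _
        norm_num
        rfl
      map_one_left := by
        intro v
        apply Subtype.ext
        funext i
        show (1 - ((1:unitInterval):ℝ)) * _ + ((1:unitInterval):ℝ) * _ = _
        norm_num }
  exact ⟨⟨F, G, ⟨HL⟩, ⟨HR⟩⟩⟩
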